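/- For every finite symmetric generating set Σ of ℤ² (with Σ = −Σ and 0 ∉ Σ), the metric space (ℤ², d_Σ), where d_Σ is the word metric associated to Σ, has roundness exactly 1. -/

import Mathlib

/-- The set of exponents `q ≥ 1` for which the roundness inequality holds for all
quadruples of points, with respect to the distance function `d`. -/
noncomputable def roundnessSet {X : Type*} (d : X → X → ℝ) : Set ℝ :=
  {q : ℝ | 1 ≤ q ∧ ∀ x00 x01 x10 x11 : X,
    d x00 x11 ^ q + d x01 x10 ^ q ≤
      d x00 x01 ^ q + d x00 x10 ^ q + d x11 x01 ^ q + d x11 x10 ^ q}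

/-- The roundness of a distance function `d` on `X`: the supremum (in `EReal`) of all
exponents `q ≥ 1` for which the roundness inequality holds for all quadruples. -/
noncomputable def roundness {X : Type*} (d : X → X → ℝ) : EReal :=
  sSup ((fun q : ℝ => (q : EReal)) '' roundnessSet d)
/-- The word length of `g` in an additive group with respect to a generating set `S`:
the least `n` such that `g` is a sum of `n` elements of `S`. -/
noncomputable def addWordLength {G : Type*} [AddGroup G] (S : Set G) (g : G) : ℕ :=
  sInf {n : ℕ | ∃ l : List G, l.length = n ∧ (∀ x ∈ l, x ∈ S) ∧ l.sum = g}

/-- The word metric on an additive group `G` associated to a generating set `S`. -/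
noncomputable def addWordDist {G : Type*} [AddGroup G] (S : Set G) (g h : G) : ℝ :=
  addWordLength S (-g + h)


section WL

lemma list_sum_map_neg' {G : Type*} [AddCommGroup G] (l : List G) :
    (l.map (fun x => -x)).sum = -l.sum := by
  induction l with
  | nil => simp
  | cons a t ih => simp [ih]; abel

variable {G : Type*} [AddCommGroup G] (S : Set G)

lemma wl_exists (hsym : ∀ v ∈ S, -v ∈ S) (hgen : AddSubgroup.closure S = ⊤) (g : G) :
    ∃ l : List G, (∀ x ∈ l, x ∈ S) ∧ l.sum = g := by
  have hg : g ∈ AddSubgroup.closure S := by rw [hgen]; trivial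
  induction hg using AddSubgroup.closure_induction with
  | mem s hs => exact ⟨[s], by simp [hs]⟩
  | zero => exact ⟨[], by simp⟩
  | add a b _ _ iha ihb =>
      obtain ⟨la, hla, hsa⟩ := iha
      obtain ⟨lb, hlb, hsb⟩ := ihb
      exact ⟨la ++ lb, by
        constructor
        · intro x hx; rcases List.mem_append.mp hx with h | h
          · exact hla x h
          · exact hlb x h
        · rw [List.sum_append, hsa, hsb]⟩
  | neg a _ ih =>
      obtain ⟨l, hl, hs⟩ := ih
      refine ⟨l.map (fun x => -x), ?_, ?_⟩
      · intro x hx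
        obtain ⟨y, hy, rfl⟩ := List.mem_map.mp hx
        exact hsym y (hl y hy)
      · rw [list_sum_map_neg', hs]

variable (hsym : ∀ v ∈ S, -v ∈ S) (hgen : AddSubgroup.closure S = ⊤)
include hsym hgen

lemma wl_spec (g : G) :
    ∃ l : List G, l.length = addWordLength S g ∧ (∀ x ∈ l, x ∈ S) ∧ l.sum = g := by
  have hne : {n : ℕ | ∃ l : List G, l.length = n ∧ (∀ x ∈ l, x ∈ S) ∧ l.sum = g}.Nonempty := by
    obtain ⟨l, h1, h2⟩ := wl_exists S hsym hgen g
    exact ⟨l.length, l, rfl, h1, h2⟩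
  exact Nat.sInf_mem hne

omit hsym hgen in
lemma wl_le {g : G} (l : List G) (hl : ∀ x ∈ l, x ∈ S) (hs : l.sum = g) :
    addWordLength S g ≤ l.length :=
  Nat.sInf_le ⟨l, rfl, hl, hs⟩

lemma wl_triangle (g h : G) :
    addWordLength S (g + h) ≤ addWordLength S g + addWordLength S h := by
  obtain ⟨lg, hlg, hg1, hg2⟩ := wl_spec S hsym hgen g
  obtain ⟨lh, hlh, hh1, hh2⟩ := wl_spec S hsym hgen h
  calc addWordLength S (g + h) ≤ (lg ++ lh).length := by
        refine wl_le S _ ?_ ?_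
        · intro x hx; rcases List.mem_append.mp hx with h' | h'
          · exact hg1 x h'
          · exact hh1 x h'
        · rw [List.sum_append, hg2, hh2]
    _ = addWordLength S g + addWordLength S h := by
        rw [List.length_append, hlg, hlh]

lemma wl_neg (g : G) : addWordLength S (-g) = addWordLength S g := by
  have key : ∀ k : G, addWordLength S (-k) ≤ addWordLength S k := by
    intro k
    obtain ⟨l, hl, h1, h2⟩ := wl_spec S hsym hgen k
    calc addWordLength S (-k) ≤ (l.map (fun x => -x)).length := by
          refine wl_le S _ ?_ ?_
          · intro x hx
            obtain ⟨y, hy, rfl⟩ := List.mem_map.mp hx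
            exact hsym y (h1 y hy)
          · rw [list_sum_map_neg', h2]
      _ = addWordLength S k := by rw [List.length_map, hl]
  refine le_antisymm (key g) ?_
  have := key (-g); rwa [neg_neg] at this

lemma wl_gen (h0 : (0:G) ∉ S) {s : G} (hs : s ∈ S) : addWordLength S s = 1 := by
  refine le_antisymm ?_ ?_
  · have := wl_le S (g := s) [s] (by simpa using hs) (by simp)
    simpa using this
  · have hne : s ≠ 0 := fun h => h0 (h ▸ hs)
    refine Nat.one_le_iff_ne_zero.mpr ?_
    intro h
    obtain ⟨l, hl, _, h2⟩ := wl_spec S hsym hgen s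
    rw [h, List.length_eq_zero_iff] at hl
    subst hl; simp at h2; exact hne h2.symm

omit hsym hgen in
lemma wl_nsmul_le (n : ℕ) {c : G} (hc : c ∈ S) : addWordLength S (n • c) ≤ n := by
  have := wl_le S (List.replicate n c) (by intro x hx; rw [List.eq_of_mem_replicate hx]; exact hc)
    (List.sum_replicate n c)
  simpa using this

/-- symmetry of the word distance -/
lemma wl_symm (g h : G) : addWordLength S (-g + h) = addWordLength S (-h + g) := by
  have : -h + g = -(-g + h) := by abel
  rw [this, wl_neg S hsym hgen]

/-- quadruple of triangle inequalities giving roundness ≥ 1 -/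
lemma wl_round_one (a b c d : G) :
    (addWordLength S (-a + d) : ℝ) + (addWordLength S (-b + c) : ℝ) ≤
      (addWordLength S (-a + b) : ℝ) + (addWordLength S (-a + c) : ℝ) +
      (addWordLength S (-d + b) : ℝ) + (addWordLength S (-d + c) : ℝ) := by
  have tri : ∀ g h k : G, addWordLength S (-g + k) ≤
      addWordLength S (-g + h) + addWordLength S (-h + k) := by
    intro g h k
    have he : -g + k = (-g + h) + (-h + k) := by abel
    rw [he]
    exact wl_triangle S hsym hgen _ _
  have t1 := tri a b d
  have t2 := tri a c d
  have t3 := tri b a c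
  have t4 := tri b d c
  have s1 := wl_symm S hsym hgen b d
  have s2 := wl_symm S hsym hgen b a
  have s3 := wl_symm S hsym hgen c d
  have T1 : (addWordLength S (-a + d) : ℝ) ≤ addWordLength S (-a + b) + addWordLength S (-b + d) := by
    exact_mod_cast t1
  have T2 : (addWordLength S (-a + d) : ℝ) ≤ addWordLength S (-a + c) + addWordLength S (-c + d) := by
    exact_mod_cast t2
  have T3 : (addWordLength S (-b + c) : ℝ) ≤ addWordLength S (-b + a) + addWordLength S (-a + c) := by
    exact_mod_cast t3
  have T4 : (addWordLength S (-b + c) : ℝ) ≤ addWordLength S (-b + d) + addWordLength S (-d + c) := by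
    exact_mod_cast t4
  have S1 : (addWordLength S (-b + d) : ℝ) = addWordLength S (-d + b) := by exact_mod_cast s1
  have S2 : (addWordLength S (-b + a) : ℝ) = addWordLength S (-a + b) := by exact_mod_cast s2
  have S3 : (addWordLength S (-c + d) : ℝ) = addWordLength S (-d + c) := by exact_mod_cast s3
  linarith

end WL

section Z2

def zf (p v : ℤ × ℤ) : ℤ := p.1 * v.1 + p.2 * v.2

lemma zf_add (p v w : ℤ × ℤ) : zf p (v + w) = zf p v + zf p w := by
  simp [zf, Prod.fst_add, Prod.snd_add]; ring

lemma zf_zero (p : ℤ × ℤ) : zf p 0 = 0 := by simp [zf]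

lemma zf_nsmul (p v : ℤ × ℤ) (n : ℕ) : zf p (n • v) = n * zf p v := by
  induction n with
  | zero => simp [zf_zero]
  | succ k ih => rw [succ_nsmul, zf_add, ih]; push_cast; ring

lemma zf_sum (p : ℤ × ℤ) (l : List (ℤ × ℤ)) : zf p l.sum = (l.map (zf p)).sum := by
  induction l with
  | nil => simp [zf_zero]
  | cons a t ih => simp [zf_add, ih]

variable (S : Set (ℤ × ℤ))

lemma wl_lower (hsym : ∀ v ∈ S, -v ∈ S) (hgen : AddSubgroup.closure S = ⊤)
    (p : ℤ × ℤ) (μ : ℤ) (hμ : ∀ s ∈ S, zf p s ≤ μ) (g : ℤ × ℤ) :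
    zf p g ≤ (addWordLength S g : ℤ) * μ := by
  obtain ⟨l, hl, h1, h2⟩ := wl_spec S hsym hgen g
  rw [← hl, ← h2, zf_sum]
  have := List.sum_le_card_nsmul (l.map (zf p)) μ (by
    intro x hx
    obtain ⟨y, hy, rfl⟩ := List.mem_map.mp hx
    exact hμ y (h1 y hy))
  simpa [smul_eq_mul, mul_comm] using this

lemma exists_cfg (hfin : S.Finite) (hsym : ∀ v ∈ S, -v ∈ S)
    (h0 : (0 : ℤ × ℤ) ∉ S) (hgen : AddSubgroup.closure S = ⊤) :
    ∃ (c e p₁ p₂ : ℤ × ℤ), c ∈ S ∧ e ∈ S ∧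
      (∀ s ∈ S, zf p₁ s ≤ zf p₁ c) ∧ (∀ s ∈ S, zf p₂ s ≤ zf p₂ c) ∧
      0 < zf p₁ c ∧ 0 < zf p₂ c ∧ 0 < zf p₁ e ∧ zf p₂ e ≤ 0 := by
  classical
  have hSne : S.Nonempty := by
    rcases Set.eq_empty_or_nonempty S with h | h
    · exfalso
      rw [h, AddSubgroup.closure_empty] at hgen
      have : ((1,0) : ℤ × ℤ) ∈ (⊥ : AddSubgroup (ℤ × ℤ)) := by rw [hgen]; trivial
      simp [AddSubgroup.mem_bot] at this
    · exact h
  obtain ⟨s₀, hs₀⟩ := hSne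
  have hs₀0 : s₀ ≠ 0 := fun h => h0 (h ▸ hs₀)
  set r : ℤ × ℤ := (-s₀.2, s₀.1) with hr
  have hrs₀ : zf r s₀ = 0 := by simp [zf, hr]; ring
  have hs₀s₀ : 0 < zf s₀ s₀ := by
    have h1 : s₀.1 ≠ 0 ∨ s₀.2 ≠ 0 := by
      by_contra h
      push_neg at h
      exact hs₀0 (Prod.ext h.1 h.2)
    rcases h1 with h | h
    · exact add_pos_of_pos_of_nonneg (mul_self_pos.mpr h) (mul_self_nonneg _)
    · exact add_pos_of_nonneg_of_pos (mul_self_nonneg _) (mul_self_pos.mpr h)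
  have hrr : 0 < zf r r := by simpa [zf, hr, add_comm] using hs₀s₀
  set T : Finset (ℤ × ℤ) := hfin.toFinset with hT
  have hmemT : ∀ {x : ℤ × ℤ}, x ∈ T ↔ x ∈ S := fun {x} => hfin.mem_toFinset
  have hTne : T.Nonempty := ⟨s₀, hmemT.mpr hs₀⟩
  obtain ⟨c₀, hc₀T, hc₀max⟩ := T.exists_max_image (zf r) hTne
  have hμ₂pos : 0 < zf r c₀ := by
    by_contra h
    push_neg at h
    have hall : ∀ s ∈ S, zf r s = 0 := by
      intro s hs
      have h1 : zf r s ≤ 0 := le_trans (hc₀max s (hmemT.mpr hs)) h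
      have h2 : zf r (-s) ≤ 0 := le_trans (hc₀max (-s) (hmemT.mpr (hsym s hs))) h
      have : zf r (-s) = -zf r s := by simp [zf]; ring
      omega
    set φ : (ℤ × ℤ) →+ ℤ :=
      { toFun := zf r
        map_zero' := by simp [zf]
        map_add' := fun a b => by simp [zf]; ring }
    have hle : AddSubgroup.closure S ≤ φ.ker := by
      rw [AddSubgroup.closure_le]
      intro s hs
      simpa [AddMonoidHom.mem_ker, φ] using hall s hs
    rw [hgen] at hle
    have : zf r r = 0 := hle (AddSubgroup.mem_top r)
    omega
  set A : Finset (ℤ × ℤ) := T.filter (fun s => zf r s = zf r c₀) with hA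
  have hAne : A.Nonempty := ⟨c₀, by simp [hA, hc₀T]⟩
  obtain ⟨c, hcA, hcmax⟩ := A.exists_max_image (zf s₀) hAne
  have hcT : c ∈ T := (Finset.mem_filter.mp hcA).1
  have hcS : c ∈ S := hmemT.mp hcT
  have hcr : zf r c = zf r c₀ := (Finset.mem_filter.mp hcA).2
  obtain ⟨k, hkT, hkmax⟩ := T.exists_max_image (zf s₀) hTne
  set K : ℤ := zf s₀ k with hK
  have hKs₀ : zf s₀ s₀ ≤ K := hkmax s₀ (hmemT.mpr hs₀)
  have hKc : zf s₀ c ≤ K := hkmax c hcT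
  set M : ℤ := K - zf s₀ c with hM
  have hM0 : 0 ≤ M := by omega
  set N : ℤ := M + 1 with hN
  have hN1 : 1 ≤ N := by omega
  set p₁ : ℤ × ℤ := (N * r.1 + s₀.1, N * r.2 + s₀.2) with hp₁
  have hp₁v : ∀ v, zf p₁ v = N * zf r v + zf s₀ v := by
    intro v; simp [zf, hp₁]; ring
  refine ⟨c, s₀, p₁, r, hcS, hs₀, ?_, ?_, ?_, ?_, ?_, ?_⟩
  · intro s hs
    rw [hp₁v, hp₁v]
    have h1 : zf r s ≤ zf r c₀ := hc₀max s (hmemT.mpr hs)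
    have h2 : zf s₀ s ≤ K := hkmax s (hmemT.mpr hs)
    rcases eq_or_lt_of_le h1 with heq | hlt
    · have hsA : s ∈ A := Finset.mem_filter.mpr ⟨hmemT.mpr hs, heq⟩
      have := hcmax s hsA
      rw [hcr, heq]
      omega
    · have h3 : zf r s ≤ zf r c₀ - 1 := by omega
      have h4 : N * zf r s ≤ N * (zf r c₀ - 1) :=
        mul_le_mul_of_nonneg_left h3 (by omega)
      rw [hcr]
      nlinarith
  · intro s hs
    rw [hcr]
    exact hc₀max s (hmemT.mpr hs)
  · rw [hp₁v, hcr]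
    nlinarith
  · rw [hcr]; exact hμ₂pos
  · rw [hp₁v, hrs₀]
    omega
  · rw [hrs₀]

end Z2

section Main

variable (S : Set (ℤ × ℤ))

/-- Part A : 1 belongs to the roundness set. -/
lemma one_mem_roundnessSet (hsym : ∀ v ∈ S, -v ∈ S) (hgen : AddSubgroup.closure S = ⊤) :
    (1 : ℝ) ∈ roundnessSet (addWordDist S) := by
  refine ⟨le_refl _, ?_⟩
  intro a b c d
  simp only [Real.rpow_one, addWordDist]
  exact wl_round_one S hsym hgen a b c d

/-- the analytic key : (x+1)^q > x^q + 2 when x^(q-1) > 2 -/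
lemma rpow_key {q x : ℝ} (hq : 1 < q) (hx : 1 ≤ x) (h2 : 2 < x ^ (q - 1)) :
    x ^ q + 2 < (x + 1) ^ q := by
  have h0x : (0:ℝ) < x := by linarith
  have h0x1 : (0:ℝ) < x + 1 := by linarith
  have hxq : x ^ q = x ^ (q - 1) * x := by
    calc x ^ q = x ^ (q - 1 + 1) := by ring_nf
      _ = x ^ (q-1) * x ^ (1:ℝ) := Real.rpow_add h0x _ _
      _ = x ^ (q - 1) * x := by rw [Real.rpow_one]
  have hx1q : (x + 1) ^ q = (x + 1) ^ (q - 1) * (x + 1) := by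
    calc (x+1) ^ q = (x+1) ^ (q - 1 + 1) := by ring_nf
      _ = (x+1) ^ (q-1) * (x+1) ^ (1:ℝ) := Real.rpow_add h0x1 _ _
      _ = (x+1) ^ (q - 1) * (x + 1) := by rw [Real.rpow_one]
  have hmono : x ^ (q-1) ≤ (x+1) ^ (q-1) :=
    Real.rpow_le_rpow (le_of_lt h0x) (by linarith) (by linarith)
  calc x ^ q + 2 < x ^ q + x ^ (q-1) := by linarith
    _ = x ^ (q-1) * (x + 1) := by rw [hxq]; ring
    _ ≤ (x+1) ^ (q-1) * (x + 1) := mul_le_mul_of_nonneg_right hmono (by linarith)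
    _ = (x + 1) ^ q := hx1q.symm

/-- Part B : every element of the roundness set is at most 1. -/
lemma roundnessSet_le_one (hfin : S.Finite) (hsym : ∀ v ∈ S, -v ∈ S)
    (h0 : (0 : ℤ × ℤ) ∉ S) (hgen : AddSubgroup.closure S = ⊤) :
    ∀ q ∈ roundnessSet (addWordDist S), q ≤ 1 := by
  intro q hq
  by_contra hq1
  push_neg at hq1
  obtain ⟨c, e, p₁, p₂, hcS, heS, hmax₁, hmax₂, hc₁, hc₂, he₁, he₂⟩ :=
    exists_cfg S hfin hsym h0 hgen
  -- length facts
  have hLnc : ∀ n : ℕ, addWordLength S (n • c) = n := by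
    intro n
    refine le_antisymm (wl_nsmul_le S n hcS) ?_
    have h1 := wl_lower S hsym hgen p₁ (zf p₁ c) hmax₁ (n • c)
    rw [zf_nsmul] at h1
    have h2 : (n:ℤ) ≤ (addWordLength S (n • c) : ℤ) := le_of_mul_le_mul_right h1 hc₁
    exact_mod_cast h2
  have hD1 : ∀ n : ℕ, (n + 1 : ℕ) ≤ addWordLength S (n • c + e) := by
    intro n
    have h1 := wl_lower S hsym hgen p₁ (zf p₁ c) hmax₁ (n • c + e)
    rw [zf_add, zf_nsmul] at h1
    have h2 : (n:ℤ) * zf p₁ c < (addWordLength S (n • c + e) : ℤ) * zf p₁ c := by linarith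
    have h3 : (n:ℤ) < (addWordLength S (n • c + e) : ℤ) := lt_of_mul_lt_mul_right h2 (le_of_lt hc₁)
    omega
  have hD2 : ∀ n : ℕ, (n : ℕ) ≤ addWordLength S (n • c - e) := by
    intro n
    have h1 := wl_lower S hsym hgen p₂ (zf p₂ c) hmax₂ (n • c - e)
    have he : n • c - e = n • c + (-e) := by abel
    rw [he, zf_add, zf_nsmul] at h1
    have hneg : zf p₂ (-e) = -zf p₂ e := by simp [zf]; ring
    rw [hneg] at h1
    have h2 : (n:ℤ) * zf p₂ c ≤ (addWordLength S (n • c + -e) : ℤ) * zf p₂ c := by linarith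
    have h3 : (n:ℤ) ≤ (addWordLength S (n • c + -e) : ℤ) := le_of_mul_le_mul_right h2 hc₂
    have : n • c + -e = n • c - e := by abel
    rw [this] at h3
    exact_mod_cast h3
  have hLe : addWordLength S e = 1 := wl_gen S hsym hgen h0 heS
  have hLnege : addWordLength S (-e) = 1 := by rw [wl_neg S hsym hgen, hLe]
  -- choose n
  have htend : Filter.Tendsto (fun n : ℕ => (n:ℝ) ^ (q - 1)) Filter.atTop Filter.atTop :=
    (tendsto_rpow_atTop (by linarith)).comp tendsto_natCast_atTop_atTop
  obtain ⟨n, hn2, hn1⟩ := ((htend.eventually_gt_atTop 2).and (Filter.eventually_ge_atTop 1)).exists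
  -- instantiate roundness inequality
  have hineq := hq.2 0 (n • c) e (n • c + e)
  have hd : ∀ x y : ℤ × ℤ, addWordDist S x y = (addWordLength S (-x + y) : ℝ) := fun _ _ => rfl
  rw [hd, hd, hd, hd, hd, hd] at hineq
  have e1 : -(0:ℤ×ℤ) + (n • c + e) = n • c + e := by abel
  have e2 : -(n • c) + e = -(n • c - e) := by abel
  have e3 : -(0:ℤ×ℤ) + n • c = n • c := by abel
  have e4 : -(0:ℤ×ℤ) + e = e := by abel
  have e5 : -(n • c + e) + n • c = -e := by abel
  have e6 : -(n • c + e) + e = -(n • c) := by abel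
  rw [e1, e2, e3, e4, e5, e6] at hineq
  rw [wl_neg S hsym hgen (n • c - e), wl_neg S hsym hgen (n • c)] at hineq
  rw [hLnc, hLe, hLnege] at hineq
  -- numeric contradiction
  have hq0 : (0:ℝ) ≤ q := by linarith
  have hx1 : (1:ℝ) ≤ (n:ℝ) := by exact_mod_cast hn1
  have E1 : ((n:ℝ) + 1) ^ q ≤ (addWordLength S (n • c + e) : ℝ) ^ q := by
    refine Real.rpow_le_rpow (by positivity) ?_ hq0
    exact_mod_cast hD1 n
  have E2 : ((n:ℝ)) ^ q ≤ (addWordLength S (n • c - e) : ℝ) ^ q := by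
    refine Real.rpow_le_rpow (by positivity) ?_ hq0
    exact_mod_cast hD2 n
  have hkey := rpow_key hq1 hx1 hn2
  simp only [Nat.cast_one, Real.one_rpow] at hineq
  linarith

end Main


/-- Every Cayley graph of `ℤ²` has roundness exactly 1: for every finite symmetric
generating set `Σ` with `0 ∉ Σ`, the word metric `d_Σ` on `ℤ²` has roundness `1`. -/
theorem roundness_z2_eq_one (S : Set (ℤ × ℤ))
    (hfin : S.Finite) (hsym : ∀ v ∈ S, -v ∈ S) (h0 : (0 : ℤ × ℤ) ∉ S)
    (hgen : AddSubgroup.closure S = ⊤) :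
    roundness (addWordDist S) = (1 : EReal) := by
  unfold roundness
  refine le_antisymm (sSup_le ?_) (le_sSup ?_)
  · rintro x ⟨p, hp, rfl⟩
    rw [← EReal.coe_one]
    exact EReal.coe_le_coe_iff.mpr (roundnessSet_le_one S hfin hsym h0 hgen p hp)
  · exact ⟨1, one_mem_roundnessSet S hsym hgen, EReal.coe_one⟩
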